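/- Assume the maximum setup: u, v : ℝ^d → ℝ are bounded Borel measurable, φ : [0,∞) → ℝ is C² with φ' ≥ 0 and φ'' ≤ 0, and ψ(x,y) := u(x) − v(y) − φ(‖x−y‖) attains a global maximum at (x̄, ȳ) with x̄ ≠ ȳ; set a := x̄ − ȳ, â := a/‖a‖ and p := φ'(‖a‖)·â. Let j : ℝ^d × ℝ^d → ℝ^d be any Borel function, set Δ(z) := j(x̄,z) − j(ȳ,z), let 𝒞 ⊆ ℝ^d be any Borel set, let 0 < δ < ‖a‖, and let μ be a nonnegative Borel measure on ℝ^d for which all integrands appearing below are integrable. Then ∫_{B \ 𝒞} (u(x̄+j(x̄,z)) − u(x̄) − ⟨p, j(x̄,z)⟩) dμ(z) − ∫_{B \ 𝒞} (v(ȳ+j(ȳ,z)) − v(ȳ) − ⟨p, j(ȳ,z)⟩) dμ(z) ≤ 2φ'(‖a‖) ∫_{{z ∈ B \ 𝒞 : ‖Δ(z)‖ ≥ δ}} ‖Δ(z)‖ dμ(z) + ∫_{{z ∈ B \ 𝒞 : ‖Δ(z)‖ ≤ δ}} sup_{s∈[−1,1]} ( φ'(‖a+sΔ(z)‖)/‖a+sΔ(z)‖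 ) ‖Δ(z)‖² dμ(z). -/

import Mathlib

open MeasureTheory RealInnerProductSpace Set


theorem my_tangent {φ : ℝ → ℝ} (hφ : ContDiff ℝ 2 φ)
    (hφ'' : ∀ t : ℝ, 0 ≤ t → deriv (deriv φ) t ≤ 0)
    {r t : ℝ} (hr : 0 ≤ r) (ht : 0 ≤ t) :
    φ t - φ r ≤ deriv φ r * (t - r) := by
  have hdiff : Differentiable ℝ φ := hφ.differentiable two_ne_zero
  have hφ'cd : ContDiff ℝ 1 (deriv φ) := by
    have h2 : ContDiff ℝ (1 + 1) φ := by norm_num; exact hφ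
    exact (contDiff_succ_iff_deriv.mp h2).2.2
  have hanti : AntitoneOn (deriv φ) (Ici (0:ℝ)) := by
    apply antitoneOn_of_deriv_nonpos (convex_Ici 0) hφ'cd.continuous.continuousOn
      ((hφ'cd.differentiable one_ne_zero).differentiableOn)
    intro x hx
    rw [interior_Ici] at hx
    exact hφ'' x hx.le
  rcases lt_trichotomy r t with h | h | h
  · obtain ⟨c, hc, hderiv⟩ := exists_deriv_eq_slope φ h hφ.continuous.continuousOn
      hdiff.differentiableOn
    rw [eq_div_iff (by intro h0; linarith [sub_eq_zero.mp h0] : t - r ≠ 0)] at hderiv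
    have heq : φ t - φ r = deriv φ c * (t - r) := hderiv.symm
    have hle : deriv φ c ≤ deriv φ r :=
      hanti (by exact hr) (le_trans hr hc.1.le) hc.1.le
    rw [heq]
    exact mul_le_mul_of_nonneg_right hle (by linarith)
  · simp [h]
  · obtain ⟨c, hc, hderiv⟩ := exists_deriv_eq_slope φ h hφ.continuous.continuousOn
      hdiff.differentiableOn
    rw [eq_div_iff (by intro h0; linarith [sub_eq_zero.mp h0] : r - t ≠ 0)] at hderiv
    have heq : φ r - φ t = deriv φ c * (r - t) := hderiv.symm
    have hle : deriv φ r ≤ deriv φ c :=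
      hanti (le_trans ht hc.1.le) (by exact hr) hc.2.le
    nlinarith

theorem my_anti {φ : ℝ → ℝ} (hφ : ContDiff ℝ 2 φ)
    (hφ'' : ∀ t : ℝ, 0 ≤ t → deriv (deriv φ) t ≤ 0) :
    AntitoneOn (deriv φ) (Ici (0:ℝ)) := by
  have hφ'cd : ContDiff ℝ 1 (deriv φ) := by
    have h2 : ContDiff ℝ (1 + 1) φ := by norm_num; exact hφ
    exact (contDiff_succ_iff_deriv.mp h2).2.2
  apply antitoneOn_of_deriv_nonpos (convex_Ici 0) hφ'cd.continuous.continuousOn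
    ((hφ'cd.differentiable one_ne_zero).differentiableOn)
  intro x hx
  rw [interior_Ici] at hx
  exact hφ'' x hx.le

set_option maxHeartbeats 1000000 in
/-- **Estimate outside the cone for Lévy–Itô operators (Lemma est_LI3).**
In the maximum setup, with `Δ(z) = j(x̄,z) − j(ȳ,z)` and `0 < δ < ‖a‖`, the difference
of the Lévy–Itô nonlocal terms over `B \ 𝒞` is bounded by
`2φ'(‖a‖)∫_{‖Δ‖≥δ} ‖Δ(z)‖ dμ + ∫_{‖Δ‖≤δ} sup_{|s|≤1}(φ'(‖a+sΔ(z)‖)/‖a+sΔ(z)‖)‖Δ(z)‖² dμ`. -/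
theorem outside_cone_estimate_levy_ito {d : ℕ}
    (u v : EuclideanSpace ℝ (Fin d) → ℝ)
    (hum : Measurable u) (hvm : Measurable v)
    (hub : ∃ C, ∀ x, |u x| ≤ C) (hvb : ∃ C, ∀ x, |v x| ≤ C)
    (φ : ℝ → ℝ) (hφ : ContDiff ℝ 2 φ)
    (hφ' : ∀ t : ℝ, 0 ≤ t → 0 ≤ deriv φ t)
    (hφ'' : ∀ t : ℝ, 0 ≤ t → deriv (deriv φ) t ≤ 0)
    (xb yb : EuclideanSpace ℝ (Fin d)) (hxy : xb ≠ yb)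
    (hmax : ∀ x y, u x - v y - φ ‖x - y‖ ≤ u xb - v yb - φ ‖xb - yb‖)
    (a : EuclideanSpace ℝ (Fin d)) (ha : a = xb - yb)
    (p : EuclideanSpace ℝ (Fin d)) (hp : p = deriv φ ‖a‖ • (‖a‖⁻¹ • a))
    (j : EuclideanSpace ℝ (Fin d) → EuclideanSpace ℝ (Fin d) → EuclideanSpace ℝ (Fin d))
    (hj : Measurable (Function.uncurry j))
    (Δ : EuclideanSpace ℝ (Fin d) → EuclideanSpace ℝ (Fin d))
    (hΔ : ∀ z, Δ z = j xb z - j yb z)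
    (Cone : Set (EuclideanSpace ℝ (Fin d))) (hConem : MeasurableSet Cone)
    (δ : ℝ) (hδ0 : 0 < δ) (hδa : δ < ‖a‖)
    (μ : Measure (EuclideanSpace ℝ (Fin d)))
    (g : EuclideanSpace ℝ (Fin d) → ℝ)
    (hg : ∀ z, g z = (⨆ s : Icc (-1:ℝ) 1,
        deriv φ ‖a + (s : ℝ) • Δ z‖ / ‖a + (s : ℝ) • Δ z‖) * ‖Δ z‖ ^ 2)
    (hint1 : IntegrableOn (fun z => u (xb + j xb z) - u xb - ⟪p, j xb z⟫)
      (Metric.closedBall 0 1 \ Cone) μ)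
    (hint2 : IntegrableOn (fun z => v (yb + j yb z) - v yb - ⟪p, j yb z⟫)
      (Metric.closedBall 0 1 \ Cone) μ)
    (hint3 : IntegrableOn (fun z => ‖Δ z‖)
      {z | z ∈ Metric.closedBall 0 1 \ Cone ∧ δ ≤ ‖Δ z‖} μ)
    (hint4 : IntegrableOn g {z | z ∈ Metric.closedBall 0 1 \ Cone ∧ ‖Δ z‖ ≤ δ} μ) :
    (∫ z in Metric.closedBall 0 1 \ Cone,
        (u (xb + j xb z) - u xb - ⟪p, j xb z⟫) ∂μ)
      - ∫ z in Metric.closedBall 0 1 \ Cone,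
          (v (yb + j yb z) - v yb - ⟪p, j yb z⟫) ∂μ
    ≤ 2 * deriv φ ‖a‖
          * ∫ z in {z | z ∈ Metric.closedBall 0 1 \ Cone ∧ δ ≤ ‖Δ z‖}, ‖Δ z‖ ∂μ
      + ∫ z in {z | z ∈ Metric.closedBall 0 1 \ Cone ∧ ‖Δ z‖ ≤ δ}, g z ∂μ := by
  have hane : a ≠ 0 := by rw [ha]; exact sub_ne_zero.mpr hxy
  have hapos : 0 < ‖a‖ := norm_pos_iff.mpr hane
  set c := deriv φ ‖a‖ with hcdef
  have hc0 : 0 ≤ c := hφ' _ (norm_nonneg a)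
  have hanti : AntitoneOn (deriv φ) (Ici (0:ℝ)) := my_anti hφ hφ''
  have hpnorm : ‖p‖ = c := by
    rw [hp, norm_smul, norm_smul, norm_inv, norm_norm, Real.norm_eq_abs,
      abs_of_nonneg hc0, inv_mul_cancel₀ hapos.ne', mul_one]
  -- pointwise bound from the maximum
  have hKbound : ∀ z, (u (xb + j xb z) - u xb - ⟪p, j xb z⟫)
      - (v (yb + j yb z) - v yb - ⟪p, j yb z⟫)
      ≤ φ ‖a + Δ z‖ - φ ‖a‖ - ⟪p, Δ z⟫ := by
    intro z
    have h1 := hmax (xb + j xb z) (yb + j yb z)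
    have he : (xb + j xb z) - (yb + j yb z) = a + Δ z := by rw [ha, hΔ]; abel
    rw [he, ← ha] at h1
    have hip : ⟪p, Δ z⟫ = ⟪p, j xb z⟫ - ⟪p, j yb z⟫ := by
      rw [hΔ]; exact inner_sub_right p _ _
    linarith
  -- bound valid everywhere
  have key1 : ∀ z, φ ‖a + Δ z‖ - φ ‖a‖ - ⟪p, Δ z⟫ ≤ 2 * c * ‖Δ z‖ := by
    intro z
    have ht := my_tangent hφ hφ'' (norm_nonneg a) (norm_nonneg (a + Δ z))
    have h2 : ‖a + Δ z‖ - ‖a‖ ≤ ‖Δ z‖ := by linarith [norm_add_le a (Δ z)]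
    have h3 : |⟪p, Δ z⟫| ≤ ‖p‖ * ‖Δ z‖ := abs_real_inner_le_norm p (Δ z)
    rw [hpnorm] at h3
    have h4 := abs_le.mp h3
    have h5 : c * (‖a + Δ z‖ - ‖a‖) ≤ c * ‖Δ z‖ := mul_le_mul_of_nonneg_left h2 hc0
    linarith
  -- bound on the region ‖Δ z‖ ≤ δ
  have key2 : ∀ z, ‖Δ z‖ ≤ δ → φ ‖a + Δ z‖ - φ ‖a‖ - ⟪p, Δ z⟫ ≤ g z := by
    intro z hzδ
    have hwlt : ‖Δ z‖ < ‖a‖ := lt_of_le_of_lt hzδ hδa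
    have hpos : ∀ s : ℝ, |s| ≤ 1 → 0 < ‖a + s • Δ z‖ := by
      intro s hs
      have h1 : ‖s • Δ z‖ ≤ ‖Δ z‖ := by
        rw [norm_smul, Real.norm_eq_abs]
        nlinarith [norm_nonneg (Δ z), abs_nonneg s]
      have h2 := norm_sub_norm_le a (-(s • Δ z))
      simp only [norm_neg, sub_neg_eq_add] at h2
      linarith
    have hn1pos : 0 < ‖a + Δ z‖ := by
      have := hpos 1 (by norm_num)
      simpa using this
    have hip : ⟪p, Δ z⟫ = c * (‖a‖⁻¹ * ⟪a, Δ z⟫) := by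
      rw [hp, real_inner_smul_left, real_inner_smul_left]
    -- key algebraic inequality
    have hC : ‖a + Δ z‖ - ‖a‖ - ‖a‖⁻¹ * ⟪a, Δ z⟫ ≤ ‖Δ z‖ ^ 2 / ‖a + Δ z‖ := by
      set n1 := ‖a + Δ z‖ with hn1
      set ip := ⟪a, Δ z⟫ with hipdef
      set q := ‖a‖⁻¹ * ip with hqdef
      have hq : ‖a‖ * q = ip := by
        rw [hqdef, ← mul_assoc, mul_inv_cancel₀ hapos.ne', one_mul]
      have hCS := abs_real_inner_le_norm a (Δ z)
      have hqb : |q| ≤ ‖Δ z‖ := by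
        rw [hqdef, abs_mul, abs_inv, abs_norm]
        rw [inv_mul_le_iff₀ hapos]
        exact hCS
      have hqabs := abs_le.mp hqb
      have hccpos : 0 < ‖a‖ + q := by linarith
      have hsq : n1 ^ 2 = ‖a‖ ^ 2 + 2 * ip + ‖Δ z‖ ^ 2 := norm_add_sq_real a (Δ z)
      rw [le_div_iff₀ hn1pos]
      rcases le_total (‖a‖ + q) n1 with hcn | hcn
      · have hA1 : (n1 - (‖a‖ + q)) * n1 ≤ (n1 - (‖a‖ + q)) * (n1 + (‖a‖ + q)) :=
          mul_le_mul_of_nonneg_left (by linarith) (by linarith)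
        have hA2 : (‖a‖ + q) ^ 2 = ‖a‖ ^ 2 + 2 * ip + q ^ 2 := by
          have : (‖a‖ + q) ^ 2 = ‖a‖ ^ 2 + 2 * (‖a‖ * q) + q ^ 2 := by ring
          rw [this, hq]
        nlinarith [sq_nonneg q]
      · nlinarith [sq_nonneg ‖Δ z‖]
    -- boundedness of the sup
    have hcont : Continuous (fun s : Icc (-1:ℝ) 1 =>
        deriv φ ‖a + (s : ℝ) • Δ z‖ / ‖a + (s : ℝ) • Δ z‖) := by
      have hbase : Continuous (fun s : Icc (-1:ℝ) 1 => ‖a + (s : ℝ) • Δ z‖) :=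
        (continuous_const.add (continuous_subtype_val.smul continuous_const)).norm
      exact ((hφ.continuous_deriv one_le_two).comp hbase).div hbase
        (fun s => (hpos s (abs_le.mpr ⟨s.2.1, s.2.2⟩)).ne')
    have hbdd : BddAbove (Set.range (fun s : Icc (-1:ℝ) 1 =>
        deriv φ ‖a + (s : ℝ) • Δ z‖ / ‖a + (s : ℝ) • Δ z‖)) :=
      (isCompact_range hcont).bddAbove
    have h0 : c / ‖a‖ ≤ ⨆ s : Icc (-1:ℝ) 1,
        deriv φ ‖a + (s : ℝ) • Δ z‖ / ‖a + (s : ℝ) • Δ z‖ := by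
      have := le_ciSup hbdd (⟨0, by norm_num⟩ : Icc (-1:ℝ) 1)
      simpa only [Set.Icc.mk_zero, Set.Icc.coe_zero, zero_smul, add_zero] using this
    have h1 : deriv φ ‖a + Δ z‖ / ‖a + Δ z‖ ≤ ⨆ s : Icc (-1:ℝ) 1,
        deriv φ ‖a + (s : ℝ) • Δ z‖ / ‖a + (s : ℝ) • Δ z‖ := by
      have := le_ciSup hbdd (⟨1, by norm_num⟩ : Icc (-1:ℝ) 1)
      simpa only [Set.Icc.mk_one, Set.Icc.coe_one, one_smul] using this
    have hD : c / ‖a + Δ z‖ ≤ ⨆ s : Icc (-1:ℝ) 1,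
        deriv φ ‖a + (s : ℝ) • Δ z‖ / ‖a + (s : ℝ) • Δ z‖ := by
      rcases le_total ‖a‖ ‖a + Δ z‖ with hcn | hcn
      · exact le_trans (by gcongr) h0
      · refine le_trans ?_ h1
        have hnum : c ≤ deriv φ ‖a + Δ z‖ :=
          hanti (norm_nonneg _) (norm_nonneg a) hcn
        gcongr
    have ht := my_tangent hφ hφ'' (norm_nonneg a) (norm_nonneg (a + Δ z))
    have hstep : φ ‖a + Δ z‖ - φ ‖a‖ - ⟪p, Δ z⟫
        ≤ c * (‖a + Δ z‖ - ‖a‖ - ‖a‖⁻¹ * ⟪a, Δ z⟫) := by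
      rw [hip]; ring_nf; linarith [ht]
    have hstep2 : c * (‖a + Δ z‖ - ‖a‖ - ‖a‖⁻¹ * ⟪a, Δ z⟫)
        ≤ c * (‖Δ z‖ ^ 2 / ‖a + Δ z‖) := mul_le_mul_of_nonneg_left hC hc0
    have hstep3 : c * (‖Δ z‖ ^ 2 / ‖a + Δ z‖) = (c / ‖a + Δ z‖) * ‖Δ z‖ ^ 2 := by
      ring
    have hstep4 : (c / ‖a + Δ z‖) * ‖Δ z‖ ^ 2 ≤ g z := by
      rw [hg z]
      exact mul_le_mul_of_nonneg_right hD (sq_nonneg _)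
    linarith
  -- g is nonnegative
  have hg0 : ∀ z, 0 ≤ g z := by
    intro z
    rw [hg z]
    exact mul_nonneg (Real.iSup_nonneg fun s =>
      div_nonneg (hφ' _ (norm_nonneg _)) (norm_nonneg _)) (sq_nonneg _)
  -- measurability
  have hΔm : Measurable Δ := by
    have hjx : Measurable (fun z => j xb z) := hj.comp (measurable_const.prodMk measurable_id)
    have hjy : Measurable (fun z => j yb z) := hj.comp (measurable_const.prodMk measurable_id)
    have : Δ = fun z => j xb z - j yb z := funext hΔ
    rw [this]
    exact hjx.sub hjy
  set S := Metric.closedBall (0 : EuclideanSpace ℝ (Fin d)) 1 \ Cone with hSdef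
  have hS : MeasurableSet S := measurableSet_closedBall.diff hConem
  set A := {z | z ∈ S ∧ δ ≤ ‖Δ z‖} with hAdef
  set B2 := {z | z ∈ S ∧ ‖Δ z‖ ≤ δ} with hBdef
  have hA : MeasurableSet A := hS.inter (measurableSet_le measurable_const hΔm.norm)
  have hAS : A ⊆ S := fun z hz => hz.1
  have hTB : S \ A ⊆ B2 := by
    intro z hz
    refine ⟨hz.1, ?_⟩
    by_contra hlt
    push_neg at hlt
    exact hz.2 ⟨hz.1, hlt.le⟩
  have hsub : IntegrableOn (fun z =>
      (u (xb + j xb z) - u xb - ⟪p, j xb z⟫) - (v (yb + j yb z) - v yb - ⟪p, j yb z⟫)) S μ :=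
    hint1.sub hint2
  rw [← integral_sub hint1 hint2]
  have hsplit := setIntegral_union (disjoint_sdiff_self_right) (hS.diff hA)
    (hsub.mono_set hAS) (hsub.mono_set diff_subset) (μ := μ)
  rw [union_diff_cancel hAS] at hsplit
  have hIA : ∫ z in A, ((u (xb + j xb z) - u xb - ⟪p, j xb z⟫)
      - (v (yb + j yb z) - v yb - ⟪p, j yb z⟫)) ∂μ ≤ 2 * c * ∫ z in A, ‖Δ z‖ ∂μ := by
    have h1 := setIntegral_mono_on (hsub.mono_set hAS) (hint3.const_mul (2 * c)) hA
      (fun z _ => le_trans (hKbound z) (key1 z))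
    rwa [integral_const_mul] at h1
  have hIT : ∫ z in S \ A, ((u (xb + j xb z) - u xb - ⟪p, j xb z⟫)
      - (v (yb + j yb z) - v yb - ⟪p, j yb z⟫)) ∂μ ≤ ∫ z in B2, g z ∂μ := by
    refine le_trans (setIntegral_mono_on (hsub.mono_set diff_subset)
      (hint4.mono_set hTB) (hS.diff hA)
      (fun z hz => le_trans (hKbound z) (key2 z (hTB hz).2))) ?_
    exact setIntegral_mono_set hint4 (Filter.Eventually.of_forall fun z => hg0 z)
      (HasSubset.Subset.eventuallyLE hTB)
  rw [hsplit]
  linarith
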